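/- Follower monotonicity with respect to the leader's schedule (claim used in the proof of Lemma 2 of the paper): for every leader schedule y ∈ 𝒮 and every follower schedule z ∈ 𝒮, the follower's profit can only remain the same or decrease once the leader opens facilities rather than none, i.e., π^F(𝟘,z) ≥ π^F(y,z), where 𝟘 denotes the empty location schedule (𝟘(i,t) = 0 for all i ∈ I, t ∈ 𝒯). -/
import Mathlib

open Finset

attribute [local instance] Classical.propDecidable

/-- Data of an instance of the competitive dynamic facility location problem under
cumulative customer demand (CDFLP-CCD).  `pref j a b` means that customer `j`
strictly prefers option `a` over option `b`, where `none` is the no-service option. -/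
structure CDFLP (I J : Type*) where
  /-- number of time periods; the period set is `{1, …, T}` -/
  T : ℕ
  /-- spawning demand of customer `j` at period `t` -/
  d : J → ℕ → ℝ
  /-- reward per unit of demand captured at location `i` -/
  r : I → ℝ
  /-- splitting factor -/
  ρ : ℝ
  /-- strict preference: `pref j a b` means `a ≻_j b` -/
  pref : J → Option I → Option I → Prop

namespace CDFLP

variable {I J : Type*} [Fintype I] [Fintype J]

/-- The model hypotheses: `T ≥ 1`, nonnegative demands and rewards, `ρ ∈ [0,1]`,
and every `≻_j` is a strict linear order on `I ∪ {0}`. -/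
def Valid (P : CDFLP I J) : Prop :=
  1 ≤ P.T ∧ (∀ j t, 0 ≤ P.d j t) ∧ (∀ i, 0 ≤ P.r i) ∧
    0 ≤ P.ρ ∧ P.ρ ≤ 1 ∧ ∀ j, IsStrictTotalOrder (Option I) (P.pref j)

/-- The locations considered by customer `j`, i.e. those preferred over no service. -/
noncomputable def considered (P : CDFLP I J) (j : J) : Finset I :=
  Finset.univ.filter fun i => P.pref j (some i) none

/-- `w` is a location schedule: on the planning horizon it is `{0,1}`-valued and opens
at most one facility per period. -/
def IsSched (P : CDFLP I J) (w : I → ℕ → ℝ) : Prop :=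
  ∀ t, 1 ≤ t → t ≤ P.T → (∀ i, w i t = 0 ∨ w i t = 1) ∧ (∑ i, w i t) ≤ 1

/-- `A_j^t(y,z)`: considered locations of `j` opened by the leader or the follower
at period `t`. -/
noncomputable def captureSet (P : CDFLP I J) (y z : I → ℕ → ℝ) (j : J) (t : ℕ) : Finset I :=
  Finset.univ.filter fun i => P.pref j (some i) none ∧ (y i t = 1 ∨ z i t = 1)

/-- `t ∈ 𝒯` is a capture period of customer `j`. -/
def IsCapture (P : CDFLP I J) (y z : I → ℕ → ℝ) (j : J) (t : ℕ) : Prop :=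
  1 ≤ t ∧ t ≤ P.T ∧ (P.captureSet y z j t).Nonempty

/-- `i` is the `≻_j`-greatest element of the capture set `A_j^t(y,z)`,
i.e. `i = i*(j,t)`. -/
def IsPatron (P : CDFLP I J) (y z : I → ℕ → ℝ) (j : J) (t : ℕ) (i : I) : Prop :=
  i ∈ P.captureSet y z j t ∧
    ∀ k ∈ P.captureSet y z j t, k ≠ i → P.pref j (some i) (some k)

/-- The greatest capture period of `j` smaller than `t` (`0` if there is none). -/
noncomputable def lastCap (P : CDFLP I J) (y z : I → ℕ → ℝ) (j : J) (t : ℕ) : ℕ :=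
  ((Finset.Ico 1 t).filter fun s => P.IsCapture y z j s).sup id

/-- `D_j^{ℓt}`: demand of customer `j` spawned in periods `ℓ+1, …, t`. -/
noncomputable def D (P : CDFLP I J) (j : J) (ℓ t : ℕ) : ℝ :=
  ∑ s ∈ Finset.Icc (ℓ + 1) t, P.d j s

/-- `v_{ij}^{ℓt}(y,z)`: fraction of `D_j^{ℓt}` captured by the follower through
location `i` at period `t`. -/
noncomputable def v (P : CDFLP I J) (y z : I → ℕ → ℝ) (j : J) (i : I) (ℓ t : ℕ) : ℝ :=
  if P.IsCapture y z j t ∧ ℓ = P.lastCap y z j t ∧ P.IsPatron y z j t i ∧ z i t = 1 then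
    1 - P.ρ * y i t
  else 0

/-- `u_{ij}^{ℓt}(y,z)`: fraction of `D_j^{ℓt}` captured by the leader through
location `i` at period `t`. -/
noncomputable def u (P : CDFLP I J) (y z : I → ℕ → ℝ) (j : J) (i : I) (ℓ t : ℕ) : ℝ :=
  if P.IsCapture y z j t ∧ ℓ = P.lastCap y z j t ∧ P.IsPatron y z j t i ∧ y i t = 1 then
    1 - (1 - P.ρ) * z i t
  else 0

/-- The follower's profit `π^F(y,z)`. -/
noncomputable def profitF (P : CDFLP I J) (y z : I → ℕ → ℝ) : ℝ :=
  ∑ t ∈ Finset.Icc 1 P.T, ∑ ℓ ∈ Finset.range t, ∑ j : J, ∑ i ∈ P.considered j,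
    P.r i * P.D j ℓ t * P.v y z j i ℓ t

/-- The leader's profit `π^L(y,z)`. -/
noncomputable def profitL (P : CDFLP I J) (y z : I → ℕ → ℝ) : ℝ :=
  ∑ t ∈ Finset.Icc 1 P.T, ∑ ℓ ∈ Finset.range t, ∑ j : J, ∑ i ∈ P.considered j,
    P.r i * P.D j ℓ t * P.u y z j i ℓ t

/-- `(y,z)` is bilevel feasible: both are schedules and `z` is an optimal
reaction of the follower against `y`. -/
def BilevelFeasible (P : CDFLP I J) (y z : I → ℕ → ℝ) : Prop :=
  P.IsSched y ∧ P.IsSched z ∧ ∀ z', P.IsSched z' → P.profitF y z' ≤ P.profitF y z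


section Aux

variable {I J : Type*} [Fintype I] [Fintype J]

lemma captureSet_zero_subset (P : CDFLP I J) (y z : I → ℕ → ℝ) (j : J) (t : ℕ) :
    P.captureSet (fun _ _ => 0) z j t ⊆ P.captureSet y z j t := by
  intro i hi
  simp only [captureSet, Finset.mem_filter, Finset.mem_univ, true_and] at hi ⊢
  exact ⟨hi.1, Or.inr (hi.2.resolve_left (by norm_num))⟩

lemma isCapture_zero_imp (P : CDFLP I J) (y z : I → ℕ → ℝ) (j : J) (t : ℕ)
    (h : P.IsCapture (fun _ _ => 0) z j t) : P.IsCapture y z j t :=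
  ⟨h.1, h.2.1, h.2.2.imp fun _ hi => P.captureSet_zero_subset y z j t hi⟩

lemma lastCap_zero_le (P : CDFLP I J) (y z : I → ℕ → ℝ) (j : J) (t : ℕ) :
    P.lastCap (fun _ _ => 0) z j t ≤ P.lastCap y z j t := by
  apply Finset.sup_mono
  intro s hs
  simp only [Finset.mem_filter] at hs ⊢
  exact ⟨hs.1, P.isCapture_zero_imp y z j s hs.2⟩

lemma lastCap_lt (P : CDFLP I J) (y z : I → ℕ → ℝ) (j : J) {t : ℕ} (ht : 1 ≤ t) :
    P.lastCap y z j t < t := by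
  apply (Finset.sup_lt_iff (show (⊥ : ℕ) < t from ht)).2
  intro s hs
  simp only [Finset.mem_filter, Finset.mem_Ico] at hs
  exact hs.1.2

lemma D_nonneg (P : CDFLP I J) (hd : ∀ j t, 0 ≤ P.d j t) (j : J) (ℓ t : ℕ) :
    0 ≤ P.D j ℓ t :=
  Finset.sum_nonneg fun s _ => hd j s

lemma D_anti (P : CDFLP I J) (hd : ∀ j t, 0 ≤ P.d j t) (j : J) {ℓ ℓ' t : ℕ}
    (h : ℓ ≤ ℓ') : P.D j ℓ' t ≤ P.D j ℓ t :=
  Finset.sum_le_sum_of_subset_of_nonneg (Finset.Icc_subset_Icc (by omega) le_rfl)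
    fun s _ _ => hd j s

lemma patron_unique (P : CDFLP I J) (j : J)
    (hst : IsStrictTotalOrder (Option I) (P.pref j)) (y z : I → ℕ → ℝ) (t : ℕ)
    {i i' : I} (h : P.IsPatron y z j t i) (h' : P.IsPatron y z j t i') : i = i' := by
  by_contra hne
  haveI := hst
  have h1 := h.2 i' h'.1 (Ne.symm hne)
  have h2 := h'.2 i h.1 hne
  exact absurd (_root_.trans_of (P.pref j) h1 h2) (irrefl_of (P.pref j) _)

end Aux


/-- **Follower monotonicity.**  The follower's profit with a fixed schedule `z` can
only remain the same or decrease once the leader opens facilities rather than none: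
`π^F(𝟘, z) ≥ π^F(y, z)`. -/
theorem follower_profit_monotone (P : CDFLP I J) (hP : P.Valid)
    (y z : I → ℕ → ℝ) (hy : P.IsSched y) (hz : P.IsSched z) :
    P.profitF y z ≤ P.profitF (fun _ _ => 0) z := by
  obtain ⟨hT, hd, hr, hρ0, hρ1, hpref⟩ := hP
  unfold profitF
  apply Finset.sum_le_sum
  intro t ht
  simp only [Finset.mem_Icc] at ht
  rw [Finset.sum_comm]
  conv_rhs => rw [Finset.sum_comm]
  apply Finset.sum_le_sum
  intro j _
  have hterm0 : ∀ ℓ (i : I), 0 ≤ P.r i * P.D j ℓ t * P.v (fun _ _ => 0) z j i ℓ t := by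
    intro ℓ i
    apply mul_nonneg (mul_nonneg (hr i) (P.D_nonneg hd j ℓ t))
    unfold v
    split_ifs with h
    · norm_num
    · exact le_rfl
  by_cases hcap : ∃ i, P.IsCapture y z j t ∧ P.IsPatron y z j t i ∧ z i t = 1
  · obtain ⟨i, hC, hPat, hzi⟩ := hcap
    have hℓylt : P.lastCap y z j t < t := P.lastCap_lt y z j hC.1
    have hℓ0le : P.lastCap (fun _ _ => 0) z j t ≤ P.lastCap y z j t :=
      P.lastCap_zero_le y z j t
    have hipref : P.pref j (some i) none := by
      have := hPat.1
      simp only [captureSet, Finset.mem_filter, Finset.mem_univ, true_and] at this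
      exact this.1
    have hicons : i ∈ P.considered j := by
      simp only [considered, Finset.mem_filter, Finset.mem_univ, true_and]
      exact hipref
    have hi_cs0 : i ∈ P.captureSet (fun _ _ => 0) z j t := by
      simp only [captureSet, Finset.mem_filter, Finset.mem_univ, true_and]
      exact ⟨hipref, Or.inr hzi⟩
    have hC0 : P.IsCapture (fun _ _ => 0) z j t := ⟨hC.1, hC.2.1, ⟨i, hi_cs0⟩⟩
    have hPat0 : P.IsPatron (fun _ _ => 0) z j t i :=
      ⟨hi_cs0, fun k hk hne => hPat.2 k (P.captureSet_zero_subset y z j t hk) hne⟩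
    -- LHS is a single term
    have hL : (∑ ℓ ∈ Finset.range t, ∑ i' ∈ P.considered j,
        P.r i' * P.D j ℓ t * P.v y z j i' ℓ t)
        = P.r i * P.D j (P.lastCap y z j t) t * (1 - P.ρ * y i t) := by
      rw [Finset.sum_eq_single_of_mem (P.lastCap y z j t) (Finset.mem_range.2 hℓylt)]
      · rw [Finset.sum_eq_single_of_mem i hicons]
        · have : P.v y z j i (P.lastCap y z j t) t = 1 - P.ρ * y i t := by
            unfold v
            rw [if_pos ⟨hC, rfl, hPat, hzi⟩]
          rw [this]
        · intro i' _ hne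
          have : P.v y z j i' (P.lastCap y z j t) t = 0 := by
            unfold v
            rw [if_neg]
            rintro ⟨_, _, hPat', _⟩
            exact hne (P.patron_unique j (hpref j) y z t hPat' hPat)
          rw [this, mul_zero]
      · intro ℓ _ hne
        apply Finset.sum_eq_zero
        intro i' _
        have : P.v y z j i' ℓ t = 0 := by
          unfold v
          rw [if_neg]
          rintro ⟨_, h2, _, _⟩
          exact hne h2
        rw [this, mul_zero]
    -- RHS dominates the corresponding single term
    have hR : P.r i * P.D j (P.lastCap (fun _ _ => 0) z j t) t
        ≤ ∑ ℓ ∈ Finset.range t, ∑ i' ∈ P.considered j,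
          P.r i' * P.D j ℓ t * P.v (fun _ _ => 0) z j i' ℓ t := by
      have hv0 : P.v (fun _ _ => 0) z j i (P.lastCap (fun _ _ => 0) z j t) t = 1 := by
        unfold v
        rw [if_pos ⟨hC0, rfl, hPat0, hzi⟩]
        ring
      calc P.r i * P.D j (P.lastCap (fun _ _ => 0) z j t) t
          = P.r i * P.D j (P.lastCap (fun _ _ => 0) z j t) t
            * P.v (fun _ _ => 0) z j i (P.lastCap (fun _ _ => 0) z j t) t := by
            rw [hv0, mul_one]
        _ ≤ ∑ i' ∈ P.considered j, P.r i' * P.D j (P.lastCap (fun _ _ => 0) z j t) t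
            * P.v (fun _ _ => 0) z j i' (P.lastCap (fun _ _ => 0) z j t) t :=
            Finset.single_le_sum (fun i' _ => hterm0 _ i') hicons
        _ ≤ _ := by
            apply Finset.single_le_sum (f := fun ℓ => ∑ i' ∈ P.considered j,
              P.r i' * P.D j ℓ t * P.v (fun _ _ => 0) z j i' ℓ t)
              (fun ℓ _ => Finset.sum_nonneg fun i' _ => hterm0 ℓ i')
            exact Finset.mem_range.2 (lt_of_le_of_lt hℓ0le hℓylt)
    rw [hL]
    refine le_trans ?_ hR
    have hy01 := (hy t ht.1 ht.2).1 i
    have hρy0 : 0 ≤ P.ρ * y i t := by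
      rcases hy01 with h | h <;> rw [h] <;> [simp; simpa using hρ0]
    have hρy1 : P.ρ * y i t ≤ 1 := by
      rcases hy01 with h | h <;> rw [h] <;> [simp; simpa using hρ1]
    have hD1 : P.D j (P.lastCap y z j t) t ≤ P.D j (P.lastCap (fun _ _ => 0) z j t) t :=
      P.D_anti hd j hℓ0le
    have hD2 : 0 ≤ P.D j (P.lastCap y z j t) t := P.D_nonneg hd j _ t
    nlinarith [hr i, mul_nonneg hD2 hρy0]
  · -- no follower capture under (y, z): LHS = 0
    have hL : (∑ ℓ ∈ Finset.range t, ∑ i' ∈ P.considered j,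
        P.r i' * P.D j ℓ t * P.v y z j i' ℓ t) = 0 := by
      apply Finset.sum_eq_zero
      intro ℓ _
      apply Finset.sum_eq_zero
      intro i' _
      have : P.v y z j i' ℓ t = 0 := by
        unfold v
        rw [if_neg]
        rintro ⟨h1, _, h3, h4⟩
        exact hcap ⟨i', h1, h3, h4⟩
      rw [this, mul_zero]
    rw [hL]
    exact Finset.sum_nonneg fun ℓ _ => Finset.sum_nonneg fun i' _ => hterm0 ℓ i'


end CDFLP
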